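/- Suppose p > 1/2 (high price regime, k = 1) and define Δu(θ,p) = θ·ln(θ/p) − θ + p − (θ − 1/2)·ln(2) for θ ∈ [p, 1]. Then Δu(p,p) < 0 and ∂Δu/∂θ = ln(θ/(2p)) < 0 on [p,1], so Δu(θ,p) < 0 for all θ ∈ [p, 1]. -/

import Mathlib

open Real Set

theorem high_price_regime_no_switch (p : ℝ) (hp : 1 / 2 < p) :
    let Δu : ℝ → ℝ := fun θ => θ * Real.log (θ / p) - θ + p - (θ - 1 / 2) * Real.log 2
    Δu p < 0 ∧
    (∀ θ ∈ Icc p 1, HasDerivAt Δu (Real.log (θ / (2 * p))) θ ∧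
      Real.log (θ / (2 * p)) < 0) ∧
    ∀ θ ∈ Icc p 1, Δu θ < 0 := by
  intro Δu
  have hp0 : 0 < p := lt_trans (by norm_num) hp
  have h1 : Δu p < 0 := by
    have hΔup : Δu p = -((p - 1 / 2) * Real.log 2) := by
      simp [Δu, div_self hp0.ne']
    rw [hΔup]
    have : 0 < (p - 1 / 2) * Real.log 2 :=
      mul_pos (by linarith) (Real.log_pos (by norm_num))
    linarith
  have hderiv : ∀ θ ∈ Icc p 1, HasDerivAt Δu (Real.log (θ / (2 * p))) θ ∧
      Real.log (θ / (2 * p)) < 0 := by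
    intro θ hθ
    have hθ0 : 0 < θ := lt_of_lt_of_le hp0 hθ.1
    constructor
    · have hdp : (θ / p) ≠ 0 := by positivity
      have h2 : HasDerivAt (fun x : ℝ => Real.log (x / p)) ((θ / p)⁻¹ * (1 / p)) θ := by
        exact (Real.hasDerivAt_log hdp).comp θ ((hasDerivAt_id θ).div_const p)
      have h2' : HasDerivAt (fun x : ℝ => Real.log (x / p)) (1 / θ) θ := by
        convert h2 using 1
        field_simp
      have hm : HasDerivAt (fun θ : ℝ => θ * Real.log (θ / p))
          (1 * Real.log (θ / p) + θ * (1 / θ)) θ := (hasDerivAt_id θ).mul h2'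
      have h3 : HasDerivAt Δu
          (1 * Real.log (θ / p) + θ * (1 / θ) - 1 - 1 * Real.log 2) θ :=
        ((hm.sub (hasDerivAt_id θ)).add_const p).sub
          (((hasDerivAt_id θ).sub_const (1/2)).mul_const (Real.log 2))
      convert h3 using 1
      rw [Real.log_div hθ0.ne' (by positivity : (2:ℝ)*p ≠ 0),
        Real.log_div hθ0.ne' hp0.ne', Real.log_mul (by norm_num) hp0.ne']
      field_simp
      ring
    · apply Real.log_neg (by positivity)
      rw [div_lt_one (by linarith)]
      linarith [hθ.2]
  refine ⟨h1, hderiv, ?_⟩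
  intro θ hθ
  rcases eq_or_lt_of_le hθ.1 with heq | hlt
  · rwa [← heq]
  · have hanti : StrictAntiOn Δu (Icc p 1) := by
      apply strictAntiOn_of_deriv_neg (convex_Icc p 1)
      · exact fun x hx => (hderiv x hx).1.continuousAt.continuousWithinAt
      · intro x hx
        rw [interior_Icc] at hx
        have hx' : x ∈ Icc p 1 := ⟨le_of_lt hx.1, le_of_lt hx.2⟩
        rw [(hderiv x hx').1.deriv]
        exact (hderiv x hx').2
    have := hanti (left_mem_Icc.mpr (hθ.1.trans hθ.2)) hθ hlt
    linarith
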